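/- Let R and M be Hermitian d×d complex matrices such that: (i) R is positive semidefinite; (ii) for every z ∈ ℂ^d with z†Rz = 0 one has z†Mz ≥ 0; (iii) for every z ∈ ℂ^d with z†Rz = 0 and z†Mz = 0 one has Mz = 0. Then there exists τ ≥ 0 such that M + τR is positive semidefinite. -/

import Mathlib

set_option maxHeartbeats 1000000
open scoped Matrix ComplexOrder InnerProductSpace

lemma herm_conj {d : ℕ} {A : Matrix (Fin d) (Fin d) ℂ} (hA : A.IsHermitian)
    (u v : Fin d → ℂ) :
    star (star u ⬝ᵥ A.mulVec v) = star v ⬝ᵥ A.mulVec u := by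
  calc star (star u ⬝ᵥ A.mulVec v) = star (A.mulVec v) ⬝ᵥ u := by
        rw [Matrix.star_dotProduct, star_star]
    _ = (star v ᵥ* Aᴴ) ⬝ᵥ u := by rw [Matrix.star_mulVec]
    _ = (star v ᵥ* A) ⬝ᵥ u := by rw [hA.eq]
    _ = star v ⬝ᵥ A.mulVec u := (Matrix.dotProduct_mulVec _ _ _).symm

lemma herm_real {d : ℕ} {A : Matrix (Fin d) (Fin d) ℂ} (hA : A.IsHermitian)
    (z : Fin d → ℂ) :
    star z ⬝ᵥ A.mulVec z = ((star z ⬝ᵥ A.mulVec z).re : ℂ) := by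
  have h := herm_conj hA z z
  exact (Complex.conj_eq_iff_re.mp h).symm

lemma herm_zero_left {d : ℕ} {A : Matrix (Fin d) (Fin d) ℂ} (hA : A.IsHermitian)
    {u : Fin d → ℂ} (hu : A.mulVec u = 0) (v : Fin d → ℂ) :
    star u ⬝ᵥ A.mulVec v = 0 := by
  have h := herm_conj hA v u
  rw [← h, hu, dotProduct_zero, star_zero]

lemma herm_zero_right {d : ℕ} {A : Matrix (Fin d) (Fin d) ℂ}
    {u : Fin d → ℂ} (hu : A.mulVec u = 0) (v : Fin d → ℂ) :
    star v ⬝ᵥ A.mulVec u = 0 := by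
  rw [hu, dotProduct_zero]

lemma quad_lower_bound {E : Type*} [NormedAddCommGroup E] [InnerProductSpace ℂ E]
    [FiniteDimensional ℂ E] (q : E → ℝ) (hcont : Continuous q)
    (hhom : ∀ (t : ℝ) (x : E), q ((t : ℂ) • x) = t ^ 2 * q x)
    (S : Submodule ℂ E) (hpos : ∀ x ∈ S, x ≠ 0 → 0 < q x) :
    ∃ c : ℝ, 0 < c ∧ ∀ x ∈ S, c * ‖x‖ ^ 2 ≤ q x := by
  have hq0 : q 0 = 0 := by
    have := hhom 0 0
    simpa using this
  by_cases hS : S = ⊥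
  · refine ⟨1, one_pos, fun x hx => ?_⟩
    subst hS
    rw [Submodule.mem_bot] at hx
    simp [hx, hq0]
  · haveI : Nontrivial S := Submodule.nontrivial_iff_ne_bot.mpr hS
    haveI : ProperSpace S := FiniteDimensional.proper ℂ S
    obtain ⟨x0, hx0s, hmin⟩ := (isCompact_sphere (0 : S) 1).exists_isMinOn
      (NormedSpace.sphere_nonempty.mpr zero_le_one)
      ((hcont.comp continuous_subtype_val).continuousOn)
    have hx0n : ‖(x0 : E)‖ = 1 := by
      have := mem_sphere_zero_iff_norm.mp hx0s
      simpa using this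
    have hc : 0 < q (x0 : E) := by
      refine hpos _ x0.2 ?_
      intro h
      rw [h, norm_zero] at hx0n
      norm_num at hx0n
    refine ⟨q (x0 : E), hc, fun x hx => ?_⟩
    rcases eq_or_ne x 0 with rfl | hxne
    · simp [hq0]
    · have hn : 0 < ‖x‖ := norm_pos_iff.mpr hxne
      set u : E := ((‖x‖⁻¹ : ℝ) : ℂ) • x with hu
      have huS : u ∈ S := S.smul_mem _ hx
      have hun : ‖(⟨u, huS⟩ : S)‖ = 1 := by
        show ‖u‖ = 1
        rw [hu, norm_smul]
        simp [abs_of_nonneg (inv_nonneg.mpr hn.le), inv_mul_cancel₀ hn.ne']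
      have hmem : (⟨u, huS⟩ : S) ∈ Metric.sphere (0 : S) 1 :=
        mem_sphere_zero_iff_norm.mpr hun
      have hle : q (x0 : E) ≤ q u := hmin hmem
      have hq : q u = (‖x‖⁻¹) ^ 2 * q x := hhom _ _
      rw [hq] at hle
      have h2 : (‖x‖⁻¹) ^ 2 * ‖x‖ ^ 2 = 1 := by
        field_simp
      have h3 := mul_le_mul_of_nonneg_right hle (sq_nonneg ‖x‖)
      calc q (x0 : E) * ‖x‖ ^ 2 ≤ ‖x‖⁻¹ ^ 2 * q x * ‖x‖ ^ 2 := h3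
        _ = q x := by rw [mul_comm (‖x‖⁻¹ ^ 2) (q x), mul_assoc, h2, mul_one]

theorem stmt2 {d : ℕ} (R M : Matrix (Fin d) (Fin d) ℂ)
    (hR : R.IsHermitian) (hM : M.IsHermitian)
    (hRpsd : R.PosSemidef)
    (hMpos : ∀ z : Fin d → ℂ, star z ⬝ᵥ R.mulVec z = 0 → 0 ≤ (star z ⬝ᵥ M.mulVec z).re)
    (hMker : ∀ z : Fin d → ℂ, star z ⬝ᵥ R.mulVec z = 0 → star z ⬝ᵥ M.mulVec z = 0 →
      M.mulVec z = 0) :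
    ∃ τ : ℝ, 0 ≤ τ ∧ (M + (τ : ℂ) • R).PosSemidef := by
  classical
  set E := EuclideanSpace ℂ (Fin d) with hE
  let el : E ≃ₗ[ℂ] (Fin d → ℂ) := WithLp.linearEquiv 2 ℂ (Fin d → ℂ)
  -- subspaces
  let K : Submodule ℂ E := (LinearMap.ker R.mulVecLin).comap el.toLinearMap
  let kM : Submodule ℂ E := (LinearMap.ker M.mulVecLin).comap el.toLinearMap
  let K0 : Submodule ℂ E := K ⊓ kM
  have hKmem : ∀ z : E, z ∈ K ↔ R.mulVec (el z) = 0 := by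
    intro z
    simp [K, Matrix.mulVecLin_apply]
  have hkMmem : ∀ z : E, z ∈ kM ↔ M.mulVec (el z) = 0 := by
    intro z
    simp [kM, Matrix.mulVecLin_apply]
  -- quadratic forms
  let qM : E → ℝ := fun w => (star (el w) ⬝ᵥ M.mulVec (el w)).re
  let qR : E → ℝ := fun w => (star (el w) ⬝ᵥ R.mulVec (el w)).re
  have hdotcont : ∀ A : Matrix (Fin d) (Fin d) ℂ,
      Continuous fun v : Fin d → ℂ => (star v ⬝ᵥ A.mulVec v).re := by
    intro A
    simp only [dotProduct, Matrix.mulVec, Pi.star_apply]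
    fun_prop
  have helc : Continuous el := el.toLinearMap.continuous_of_finiteDimensional
  have hqMc : Continuous qM := (hdotcont M).comp helc
  have hqRc : Continuous qR := (hdotcont R).comp helc
  have hhom : ∀ A : Matrix (Fin d) (Fin d) ℂ, ∀ (t : ℝ) (x : E),
      (star (el ((t:ℂ) • x)) ⬝ᵥ A.mulVec (el ((t:ℂ) • x))).re
        = t ^ 2 * (star (el x) ⬝ᵥ A.mulVec (el x)).re := by
    intro A t x
    rw [map_smul]
    simp only [star_smul, smul_dotProduct, dotProduct_smul,
      Matrix.mulVec_smul, smul_eq_mul, Complex.star_def, Complex.conj_ofReal]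
    rw [← mul_assoc, ← Complex.ofReal_mul]
    rw [Complex.re_ofReal_mul]
    ring
  -- positive definiteness on K ⊓ K0ᗮ
  have hpos1 : ∀ x ∈ K ⊓ K0ᗮ, x ≠ 0 → 0 < qM x := by
    rintro x ⟨hxK, hxO⟩ hxne
    have hRx : R.mulVec (el x) = 0 := (hKmem x).mp hxK
    have hq0 : star (el x) ⬝ᵥ R.mulVec (el x) = 0 := by
      rw [hRx, dotProduct_zero]
    have hge : 0 ≤ qM x := hMpos _ hq0
    rcases hge.lt_or_eq with h | h
    · exact h
    · exfalso
      have hMz : star (el x) ⬝ᵥ M.mulVec (el x) = 0 := by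
        rw [herm_real hM]
        exact_mod_cast h.symm
      have hMx : M.mulVec (el x) = 0 := hMker _ hq0 hMz
      have hxK0 : x ∈ K0 := ⟨hxK, (hkMmem x).mpr hMx⟩
      have : (⟪x, x⟫_ℂ) = 0 := (Submodule.mem_orthogonal _ _).mp hxO x hxK0
      exact hxne (inner_self_eq_zero.mp this)
  -- positive definiteness on Kᗮ
  have hpos2 : ∀ y ∈ Kᗮ, y ≠ 0 → 0 < qR y := by
    intro y hyO hyne
    have hge : 0 ≤ qR y := by
      have := hRpsd.re_dotProduct_nonneg (el y)
      simpa using this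
    rcases hge.lt_or_eq with h | h
    · exact h
    · exfalso
      have hRz : star (el y) ⬝ᵥ R.mulVec (el y) = 0 := by
        rw [herm_real hR]
        exact_mod_cast h.symm
      have hRy : R.mulVec (el y) = 0 := (hRpsd.dotProduct_mulVec_zero_iff (el y)).mp hRz
      have hyK : y ∈ K := (hKmem y).mpr hRy
      have : (⟪y, y⟫_ℂ) = 0 := (Submodule.mem_orthogonal _ _).mp hyO y hyK
      exact hyne (inner_self_eq_zero.mp this)
  obtain ⟨c, hc, hcineq⟩ := quad_lower_bound qM hqMc (hhom M) (K ⊓ K0ᗮ) hpos1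
  obtain ⟨r, hr, hrineq⟩ := quad_lower_bound qR hqRc (hhom R) Kᗮ hpos2
  -- operator norm of M
  let lin : E →ₗ[ℂ] E := el.symm.toLinearMap ∘ₗ M.mulVecLin ∘ₗ el.toLinearMap
  let f : E →L[ℂ] E := LinearMap.toContinuousLinearMap lin
  set B : ℝ := ‖f‖ with hBdef
  have hB : 0 ≤ B := norm_nonneg f
  have hlin : ∀ v : E, el (lin v) = M.mulVec (el v) := by
    intro v
    simp [lin, Matrix.mulVecLin_apply]
  have hnorm : ∀ v : E, ‖lin v‖ ≤ B * ‖v‖ := fun v => f.le_opNorm v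
  have hinner : ∀ u v : E, (⟪u, lin v⟫_ℂ) = star (el u) ⬝ᵥ M.mulVec (el v) := by
    intro u v
    rw [EuclideanSpace.inner_eq_star_dotProduct]
    show el (lin v) ⬝ᵥ star (el u) = _
    rw [hlin v, dotProduct_comm]
  have hcs : ∀ u v : E, -(B * (‖u‖ * ‖v‖)) ≤ (⟪u, lin v⟫_ℂ).re := by
    intro u v
    have h1 : ‖(⟪u, lin v⟫_ℂ)‖ ≤ ‖u‖ * ‖lin v‖ := norm_inner_le_norm u (lin v)
    have h2 : ‖u‖ * ‖lin v‖ ≤ ‖u‖ * (B * ‖v‖) :=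
      mul_le_mul_of_nonneg_left (hnorm v) (norm_nonneg u)
    have h3 : |(⟪u, lin v⟫_ℂ).re| ≤ ‖(⟪u, lin v⟫_ℂ)‖ := Complex.abs_re_le_norm _
    nlinarith [abs_le.mp (le_trans h3 (le_trans h1 h2))]
  -- choose τ
  refine ⟨(B + B ^ 2 / c) / r, by positivity, ?_⟩
  have hherm : (M + ((((B + B ^ 2 / c) / r : ℝ)) : ℂ) • R).IsHermitian := by
    refine hM.add ?_
    show (_ • R)ᴴ = _
    rw [Matrix.conjTranspose_smul, hR.eq, Complex.star_def, Complex.conj_ofReal]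
  refine Matrix.posSemidef_iff_dotProduct_mulVec.mpr ⟨hherm, ?_⟩
  intro x
  set τ : ℝ := (B + B ^ 2 / c) / r with hτdef
  have hτ : 0 ≤ τ := by positivity
  have hτr : τ * r = B + B ^ 2 / c := div_mul_cancel₀ _ hr.ne'
  -- decompose
  set z : E := el.symm x with hzdef
  have hx : el z = x := el.apply_symm_apply x
  set xK : E := ((Submodule.orthogonalProjection K z : K) : E) with hxKdef
  have hxK : xK ∈ K := (Submodule.orthogonalProjection K z).2
  set y : E := z - xK with hydef
  have hy : y ∈ Kᗮ := K.sub_starProjection_mem_orthogonal z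
  set x0 : E := ((Submodule.orthogonalProjection K0 xK : K0) : E) with hx0def
  have hx0 : x0 ∈ K0 := (Submodule.orthogonalProjection K0 xK).2
  set x1 : E := xK - x0 with hx1def
  have hx1o : x1 ∈ K0ᗮ := K0.sub_starProjection_mem_orthogonal xK
  have hx1K : x1 ∈ K := K.sub_mem hxK hx0.1
  have hzsum : z = x0 + (x1 + y) := by
    rw [hx1def, hydef]; abel
  have hMx0 : M.mulVec (el x0) = 0 := (hkMmem x0).mp hx0.2
  have hRxK : R.mulVec (el xK) = 0 := (hKmem xK).mp hxK
  -- expansion of the M-form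
  have hxsum : x = el x0 + (el x1 + el y) := by
    rw [← hx, hzsum, map_add, map_add]
  have eM : (star x ⬝ᵥ M.mulVec x).re
      = qM x1 + 2 * (⟪x1, lin y⟫_ℂ).re + (⟪y, lin y⟫_ℂ).re := by
    rw [hxsum]
    simp only [star_add, add_dotProduct, dotProduct_add, Matrix.mulVec_add,
      herm_zero_left hM hMx0, herm_zero_right hMx0, add_zero, zero_add]
    have hconj : (star (el y) ⬝ᵥ M.mulVec (el x1)).re
        = (star (el x1) ⬝ᵥ M.mulVec (el y)).re := by
      rw [← herm_conj hM (el x1) (el y), Complex.star_def, Complex.conj_re]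
    simp only [Complex.add_re, hinner, hconj]
    show qM x1 + _ + (_ + _) = _
    ring
  have eR : (star x ⬝ᵥ R.mulVec x).re = qR y := by
    have hxsum2 : x = el xK + el y := by
      rw [← hx, hydef, map_sub]; abel
    rw [hxsum2]
    simp only [star_add, add_dotProduct, dotProduct_add, Matrix.mulVec_add,
      herm_zero_left hR hRxK, herm_zero_right hRxK, add_zero, zero_add]
    rfl
  -- the bounds
  have b1 : c * ‖x1‖ ^ 2 ≤ qM x1 := hcineq x1 ⟨hx1K, hx1o⟩
  have b2 : -(B * (‖x1‖ * ‖y‖)) ≤ (⟪x1, lin y⟫_ℂ).re := hcs x1 y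
  have b3 : -(B * (‖y‖ * ‖y‖)) ≤ (⟪y, lin y⟫_ℂ).re := hcs y y
  have b4 : r * ‖y‖ ^ 2 ≤ qR y := hrineq y hy
  have key : 0 ≤ (star x ⬝ᵥ M.mulVec x).re + τ * (star x ⬝ᵥ R.mulVec x).re := by
    rw [eM, eR]
    have hb4 : τ * (r * ‖y‖ ^ 2) ≤ τ * qR y := mul_le_mul_of_nonneg_left b4 hτ
    have hb5 : τ * (r * ‖y‖ ^ 2) = (B + B ^ 2 / c) * ‖y‖ ^ 2 := by
      rw [← mul_assoc, hτr]
    have hD2 : B ^ 2 / c * c * ‖y‖ ^ 2 = B ^ 2 * ‖y‖ ^ 2 := by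
      rw [div_mul_cancel₀ _ hc.ne']
    have h2 : c * 0 ≤ c * (c * ‖x1‖ ^ 2 - 2 * B * (‖x1‖ * ‖y‖) + B ^ 2 / c * ‖y‖ ^ 2) := by
      nlinarith [sq_nonneg (c * ‖x1‖ - B * ‖y‖), hD2]
    have hmain : (0:ℝ) ≤ c * ‖x1‖ ^ 2 - 2 * B * (‖x1‖ * ‖y‖) + B ^ 2 / c * ‖y‖ ^ 2 :=
      le_of_mul_le_mul_left h2 hc
    linarith [b1, b2, b3, hb4, hb5, hmain]
  -- conclude
  rw [Matrix.add_mulVec, Matrix.smul_mulVec, dotProduct_add,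
    dotProduct_smul, smul_eq_mul, herm_real hM x, herm_real hR x,
    ← Complex.ofReal_mul, ← Complex.ofReal_add]
  exact Complex.zero_le_real.mpr key
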